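/- Let λ be an unrefinable partition into distinct parts with largest part λ_t, and let m be the number of its missing parts (positive integers below λ_t absent from λ). Then m ≤ ⌊λ_t/2⌋. -/

import Mathlib

/-- A partition into distinct parts, encoded as a `Finset ℕ` of its parts, is *refinable*
if some part can be replaced by two or more distinct positive integers, none of which is
already a part, summing to it. -/
def Refinable (P : Finset ℕ) : Prop :=
  ∃ a ∈ P, ∃ B : Finset ℕ, 2 ≤ B.card ∧ (∀ b ∈ B, 0 < b ∧ b ∉ P) ∧ B.sum id = a

/-- An unrefinable partition with largest part `λ_t` has at most `⌊λ_t / 2⌋` missing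
parts. -/
theorem stmt7 (P : Finset ℕ) (hne : P.Nonempty) (hpos : ∀ p ∈ P, 0 < p)
    (hcard : 2 ≤ P.card) (hunref : ¬ Refinable P) :
    ((Finset.Icc 1 (P.max' hne)) \ P).card ≤ P.max' hne / 2 := by
  set L := P.max' hne with hL
  have hLP : L ∈ P := P.max'_mem hne
  calc ((Finset.Icc 1 L) \ P).card ≤ (Finset.Icc 1 (L / 2)).card := by
        apply Finset.card_le_card_of_injOn (fun x => min x (L - x))
        · intro x hx
          simp only [Finset.mem_coe, Finset.mem_sdiff, Finset.mem_Icc] at hx ⊢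
          obtain ⟨⟨h1, h2⟩, hxP⟩ := hx
          have hxL : x ≠ L := fun h => hxP (h ▸ hLP)
          omega
        · intro x hx y hy hxy
          by_contra hne'
          simp only [Finset.mem_coe, Finset.mem_sdiff, Finset.mem_Icc] at hx hy
          have hxL : x ≠ L := fun h => hx.2 (h ▸ hLP)
          have hyL : y ≠ L := fun h => hy.2 (h ▸ hLP)
          have hsum : x + y = L := by
            simp only at hxy; omega
          apply hunref
          refine ⟨L, hLP, {x, y}, ?_, ?_, ?_⟩
          · rw [Finset.card_insert_of_notMem (by simp [hne']), Finset.card_singleton]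
          · intro b hb
            simp only [Finset.mem_insert, Finset.mem_singleton] at hb
            rcases hb with rfl | rfl
            · exact ⟨hx.1.1, hx.2⟩
            · exact ⟨hy.1.1, hy.2⟩
          · rw [Finset.sum_pair hne']; exact hsum
    _ = L / 2 := by simp
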